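/- The unnormalized cochain complex of the cosimplicial abelian group D[q] (the componentwise linear dual of the free simplicial abelian group on the standard q-simplex) has trivial cohomology in all positive degrees: H^i(N(D[q])) = 0 for i ≥ 1, and H^0(N(D[q])) ≅ ℤ. -/

import Mathlib

/-- The `n`-th component of the cosimplicial abelian group `D[q]`: the
ℤ-linear dual of the free abelian group `M[q]_n` on the `n`-simplices of the
standard simplicial `q`-simplex `Δ[q]`, i.e. on the monotone sequences
`0 ≤ a_0 ≤ … ≤ a_n ≤ q` (= monotone maps `Fin (n+1) → Fin (q+1)`).  Such a
dual is identified with the group of all ℤ-valued functions on the basis. -/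
abbrev Dq (q n : ℕ) : Type := (Fin (n + 1) →o Fin (q + 1)) → ℤ

/-- The coface `d_i : D[q]^n → D[q]^{n+1}`, dual to the `i`-th face of
`Δ[q]` (precomposition with the monotone injection missing `i`). -/
def dualFace (q n : ℕ) (i : Fin (n + 2)) : Dq q n →+ Dq q (n + 1) where
  toFun φ := fun b => φ (b.comp ⟨Fin.succAbove i, (Fin.strictMono_succAbove i).monotone⟩)
  map_zero' := rfl
  map_add' := fun _ _ => rfl

/-- The differential of the unnormalized cochain complex `N(D[q])`:
the alternating sum of the cofaces. -/
def NDiffD (q n : ℕ) : Dq q n →+ Dq q (n + 1) :=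
  ∑ i : Fin (n + 2), ((-1 : ℤ) ^ (i : ℕ)) • dualFace q n i

lemma NDiffD_apply (q n : ℕ) (φ : Dq q n) (b : Fin (n + 2) →o Fin (q + 1)) :
    NDiffD q n φ b =
      ∑ i : Fin (n + 2), (-1 : ℤ) ^ (i : ℕ) *
        φ (b.comp ⟨Fin.succAbove i, (Fin.strictMono_succAbove i).monotone⟩) := by
  simp [NDiffD, dualFace, AddMonoidHom.finset_sum_apply, Finset.sum_apply]

/-- The cone on a simplex of `Δ[q]`: prepend the vertex `0`.  This is the
extra degeneracy exhibiting the contractibility of `Δ[q]`. -/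
def coneFun (q n : ℕ) (b : Fin (n + 1) →o Fin (q + 1)) : Fin (n + 2) →o Fin (q + 1) :=
  ⟨Fin.cases 0 b, by
    intro i j hij
    induction j using Fin.cases with
    | zero =>
        have : i = 0 := Fin.le_zero_iff.mp hij
        simp [this]
    | succ j =>
        induction i using Fin.cases with
        | zero => simp
        | succ i =>
            simpa using b.monotone (by simpa using hij)⟩

lemma cone_comp (q n : ℕ) (b : Fin (n + 2) →o Fin (q + 1)) (i : Fin (n + 2)) :
    coneFun q n (b.comp ⟨Fin.succAbove i, (Fin.strictMono_succAbove i).monotone⟩) =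
      (coneFun q (n + 1) b).comp
        ⟨Fin.succAbove i.succ, (Fin.strictMono_succAbove i.succ).monotone⟩ := by
  ext j
  induction j using Fin.cases with
  | zero => simp [coneFun, OrderHom.comp, Fin.succ_succAbove_zero]; rfl
  | succ k => simp [coneFun, OrderHom.comp, Fin.succ_succAbove_succ]; rfl

lemma cone_comp_zero (q n : ℕ) (b : Fin (n + 2) →o Fin (q + 1)) :
    (coneFun q (n + 1) b).comp
        ⟨Fin.succAbove (0 : Fin (n + 3)),
          (Fin.strictMono_succAbove (0 : Fin (n + 3))).monotone⟩ = b := by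
  ext j
  simp [coneFun, OrderHom.comp, Fin.zero_succAbove]; rfl

/-!
STATEMENT 9: The unnormalized cochain complex `N(D[q])` has trivial
cohomology in all positive degrees, and `H^0(N(D[q])) ≅ ℤ`.
-/
theorem cohomology_of_Dq (q : ℕ) :
    -- `H^i = 0` for `i ≥ 1`: every cocycle in positive degree is a coboundary
    (∀ (n : ℕ) (φ : Dq q (n + 1)), NDiffD q (n + 1) φ = 0 →
       ∃ ψ : Dq q n, NDiffD q n ψ = φ)
    ∧
    -- `H^0 ≅ ℤ`: the kernel of the 0-th differential is infinite cyclic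
    Nonempty (↥(AddMonoidHom.ker (NDiffD q 0)) ≃+ ℤ) := by
  constructor
  · intro n φ hφ
    refine ⟨fun b => φ (coneFun q n b), ?_⟩
    funext b
    have h0 : NDiffD q (n + 1) φ (coneFun q (n + 1) b) = 0 := by rw [hφ]; rfl
    rw [NDiffD_apply, Fin.sum_univ_succ] at h0
    rw [cone_comp_zero] at h0
    simp only [← cone_comp, Fin.val_succ, pow_succ, Fin.val_zero, pow_zero, one_mul] at h0
    rw [NDiffD_apply]
    have : ∑ i : Fin (n + 2), (-1 : ℤ) ^ (i : ℕ) * (-1) *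
        φ (coneFun q n (b.comp ⟨Fin.succAbove i, (Fin.strictMono_succAbove i).monotone⟩)) =
        -∑ i : Fin (n + 2), (-1 : ℤ) ^ (i : ℕ) *
        φ (coneFun q n (b.comp ⟨Fin.succAbove i, (Fin.strictMono_succAbove i).monotone⟩)) := by
      rw [← Finset.sum_neg_distrib]; congr 1; funext i; ring
    rw [this] at h0
    linarith
  · -- `H^0 ≅ ℤ`
    set c0 : Fin 1 →o Fin (q + 1) := ⟨fun _ => 0, monotone_const⟩ with hc0
    have key : ∀ ψ : Dq q 0, NDiffD q 0 ψ = 0 → ∀ f, ψ f = ψ c0 := by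
      intro ψ hψ f
      -- the edge from `0` to `f 0`
      have hmono : Monotone (fun j : Fin 2 => if j = 0 then (0 : Fin (q + 1)) else f 0) := by
        intro i j hij
        fin_cases i <;> fin_cases j <;> simp_all
      set h : Fin 2 →o Fin (q + 1) := ⟨_, hmono⟩ with hh
      have h0 : NDiffD q 0 ψ h = 0 := by rw [hψ]; rfl
      rw [NDiffD_apply, Fin.sum_univ_two] at h0
      have e0 : h.comp ⟨Fin.succAbove (0 : Fin 2), (Fin.strictMono_succAbove _).monotone⟩ = f := by
        ext j
        have : j = 0 := Subsingleton.elim _ _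
        subst this
        simp [hh, OrderHom.comp, Fin.zero_succAbove]
      have e1 : h.comp ⟨Fin.succAbove (1 : Fin 2), (Fin.strictMono_succAbove _).monotone⟩ = c0 := by
        ext j
        have : j = 0 := Subsingleton.elim _ _
        subst this
        simp [hh, hc0, OrderHom.comp, Fin.succAbove]
      rw [e0, e1] at h0
      simp at h0
      linarith
    refine ⟨{
      toFun := fun ψ => ψ.1 c0
      invFun := fun z => ⟨fun _ => z, by
        rw [AddMonoidHom.mem_ker]
        funext b
        rw [NDiffD_apply, Fin.sum_univ_two]
        simp⟩
      left_inv := fun ψ => by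
        apply Subtype.ext
        funext f
        exact (key ψ.1 ψ.2 f).symm
      right_inv := fun z => rfl
      map_add' := fun a b => rfl }⟩
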